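/- Let f : ℝ^n → ℝ be differentiable with L₁-Lipschitz gradient, let r > 0, and let f_r(x) := the average of f(x+u) over u uniformly distributed on the closed Euclidean ball B(0,r). Then f_r is differentiable and for every x ∈ ℝ^n, ‖∇f_r(x) − ∇f(x)‖ ≤ L₁ r. -/

import Mathlib

open MeasureTheory
open scoped RealInnerProductSpace

lemma norm_setAverage_le' {α E : Type*} [MeasurableSpace α] {μ : Measure α}
    [NormedAddCommGroup E] [NormedSpace ℝ E] {s : Set α}
    (h0 : μ s ≠ 0) (ht : μ s ≠ ⊤) {g : α → E} {C : ℝ}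
    (hC : ∀ a ∈ s, ‖g a‖ ≤ C) (hgm : AEStronglyMeasurable g (μ.restrict s)) :
    ‖⨍ a in s, g a ∂μ‖ ≤ C := by
  have hc : 0 < (μ s).toReal := ENNReal.toReal_pos h0 ht
  rw [setAverage_eq, measureReal_def, norm_smul, Real.norm_eq_abs, abs_of_nonneg (inv_nonneg.2 hc.le)]
  calc (μ s).toReal⁻¹ * ‖∫ a in s, g a ∂μ‖
      ≤ (μ s).toReal⁻¹ * (C * (μ s).toReal) :=
        mul_le_mul_of_nonneg_left
          (norm_setIntegral_le_of_norm_le_const ht.lt_top hC) (inv_nonneg.2 hc.le)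
    _ = C := by
        rw [mul_comm C, ← mul_assoc, inv_mul_cancel₀ hc.ne', one_mul]

theorem stmt_12 {n : ℕ} (f : EuclideanSpace ℝ (Fin n) → ℝ)
    (G : EuclideanSpace ℝ (Fin n) → EuclideanSpace ℝ (Fin n))
    (hG : ∀ x, HasGradientAt f (G x) x)
    (L₁ : NNReal) (hL : LipschitzWith L₁ G)
    (r : ℝ) (hr : 0 < r) :
    ∃ Gr : EuclideanSpace ℝ (Fin n) → EuclideanSpace ℝ (Fin n),
      (∀ x, HasGradientAt
        (fun y => ⨍ u in Metric.closedBall (0 : EuclideanSpace ℝ (Fin n)) r, f (y + u))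
        (Gr x) x) ∧
      ∀ x, ‖Gr x - G x‖ ≤ (L₁ : ℝ) * r := by
  let E := EuclideanSpace ℝ (Fin n)
  set B := Metric.closedBall (0 : E) r with hB
  have hB0 : (volume B) ≠ 0 := (Metric.measure_closedBall_pos volume (0:E) hr).ne'
  have hBt : (volume B) ≠ ⊤ := measure_closedBall_lt_top.ne
  have hcomp : IsCompact B := isCompact_closedBall _ _
  have hc : 0 < (volume B).toReal := ENNReal.toReal_pos hB0 hBt
  have hfC : Continuous f :=
    continuous_iff_continuousAt.2 fun x => (hG x).hasFDerivAt.continuousAt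
  have hGC : Continuous G := hL.continuous
  have hfInt : ∀ y : E, IntegrableOn (fun u => f (y + u)) B := fun y =>
    ((hfC.comp (continuous_const.add continuous_id)).continuousOn).integrableOn_compact hcomp
  have hGInt : ∀ y : E, IntegrableOn (fun u => G (y + u)) B := fun y =>
    ((hGC.comp (continuous_const.add continuous_id)).continuousOn).integrableOn_compact hcomp
  -- key quadratic bound
  have key : ∀ a b : E, ‖f b - f a - ⟪G a, b - a⟫‖ ≤ (L₁ : ℝ) * ‖b - a‖ * ‖b - a‖ := by
    intro a b
    set s := Metric.closedBall a ‖b - a‖ with hs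
    have hconv : Convex ℝ s := convex_closedBall _ _
    have hmem_a : a ∈ s := Metric.mem_closedBall_self (norm_nonneg _)
    have hmem_b : b ∈ s := by
      simp [hs, Metric.mem_closedBall, dist_eq_norm]
      exact le_of_eq (dist_eq_norm b a)
    have hder : ∀ z ∈ s, HasFDerivWithinAt f (InnerProductSpace.toDual ℝ E (G z)) s z :=
      fun z _ => (hG z).hasFDerivAt.hasFDerivWithinAt
    have hbound : ∀ z ∈ s,
        ‖InnerProductSpace.toDual ℝ E (G z) - InnerProductSpace.toDual ℝ E (G a)‖
          ≤ (L₁ : ℝ) * ‖b - a‖ := by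
      intro z hz
      rw [← map_sub, (InnerProductSpace.toDual ℝ E).norm_map]
      calc ‖G z - G a‖ = dist (G z) (G a) := (dist_eq_norm _ _).symm
        _ ≤ (L₁ : ℝ) * dist z a := hL.dist_le_mul _ _
        _ ≤ (L₁ : ℝ) * ‖b - a‖ := by
            have : dist z a ≤ ‖b - a‖ := hz
            exact mul_le_mul_of_nonneg_left this L₁.coe_nonneg
    have := hconv.norm_image_sub_le_of_norm_hasFDerivWithin_le' hder hbound hmem_a hmem_b
    rwa [InnerProductSpace.toDual_apply_apply] at this
  -- the smoothed gradient
  refine ⟨fun x => ⨍ u in B, G (x + u), ?_, ?_⟩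
  · intro x
    rw [hasGradientAt_iff_hasFDerivAt, hasFDerivAt_iff_isLittleO_nhds_zero]
    have hineq : ∀ h : E,
        ‖(⨍ u in B, f (x + h + u)) - (⨍ u in B, f (x + u))
          - InnerProductSpace.toDual ℝ E (⨍ u in B, G (x + u)) h‖
        ≤ (L₁ : ℝ) * ‖h‖ * ‖h‖ := by
      intro h
      have heq : (⨍ u in B, f (x + h + u)) - (⨍ u in B, f (x + u))
            - InnerProductSpace.toDual ℝ E (⨍ u in B, G (x + u)) h
          = ⨍ u in B, (f (x + h + u) - f (x + u) - ⟪G (x + u), h⟫) := by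
        have hCint : IntegrableOn (fun u => ⟪G (x + u), h⟫) B volume :=
          (((hGC.comp (continuous_const.add continuous_id)).inner
            continuous_const).continuousOn).integrableOn_compact hcomp
        rw [InnerProductSpace.toDual_apply_apply]
        have hinner : ⟪(⨍ u in B, G (x + u)), h⟫ = ⨍ u in B, ⟪G (x + u), h⟫ := by
          rw [setAverage_eq, setAverage_eq, real_inner_smul_left]
          congr 1
          calc ⟪(∫ u in B, G (x + u)), h⟫ = ⟪h, (∫ u in B, G (x + u))⟫ :=
                real_inner_comm _ _
            _ = ∫ u in B, ⟪h, G (x + u)⟫ := (integral_inner (hGInt x) h).symm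
            _ = ∫ u in B, ⟪G (x + u), h⟫ :=
                integral_congr_ae (Filter.Eventually.of_forall fun u => real_inner_comm _ _)
        have h12 : IntegrableOn (fun u => f (x + h + u) - f (x + u)) B volume :=
          (hfInt (x + h)).sub (hfInt x)
        rw [hinner, setAverage_eq, setAverage_eq, setAverage_eq, setAverage_eq,
          ← smul_sub, ← smul_sub]
        congr 1
        rw [← integral_sub (hfInt (x + h)) (hfInt x), ← integral_sub h12 hCint]
      rw [heq]
      apply norm_setAverage_le' hB0 hBt
      · intro u _
        have := key (x + u) (x + h + u)
        have hsub : x + h + u - (x + u) = h := by abel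
        rwa [hsub] at this
      · exact ((((hfC.comp (continuous_const.add continuous_id)).sub
          (hfC.comp (continuous_const.add continuous_id))).sub
          ((hGC.comp (continuous_const.add continuous_id)).inner
            continuous_const)).continuousOn).aestronglyMeasurable hcomp.measurableSet
    have h1 : (fun h : E => (⨍ u in B, f (x + h + u)) - (⨍ u in B, f (x + u))
          - InnerProductSpace.toDual ℝ E (⨍ u in B, G (x + u)) h)
        =O[nhds 0] fun h => ‖h‖ * ‖h‖ := by
      apply Asymptotics.IsBigO.of_bound (L₁ : ℝ)
      filter_upwards with h
      calc _ ≤ (L₁ : ℝ) * ‖h‖ * ‖h‖ := hineq h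
        _ = (L₁ : ℝ) * ‖(‖h‖ * ‖h‖)‖ := by
            rw [Real.norm_eq_abs, abs_of_nonneg (mul_nonneg (norm_nonneg _) (norm_nonneg _))]
            ring
    have h2 : (fun h : E => ‖h‖ * ‖h‖) =o[nhds 0] fun h : E => h := by
      rw [Asymptotics.isLittleO_iff]
      intro ε hε
      filter_upwards [Metric.ball_mem_nhds (0 : E) hε] with h hh
      have : ‖h‖ < ε := by simpa [dist_eq_norm] using hh
      rw [Real.norm_eq_abs, abs_of_nonneg (mul_nonneg (norm_nonneg _) (norm_nonneg _))]
      exact mul_le_mul_of_nonneg_right this.le (norm_nonneg _)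
    exact h1.trans_isLittleO h2
  · intro x
    have heq : (⨍ u in B, G (x + u)) - G x = ⨍ u in B, (G (x + u) - G x) := by
      rw [setAverage_eq, setAverage_eq, integral_sub (hGInt x)
        (integrableOn_const hBt), smul_sub, setIntegral_const, measureReal_def,
        smul_comm, smul_inv_smul₀ hc.ne']
    rw [heq]
    apply norm_setAverage_le' hB0 hBt
    · intro u hu
      calc ‖G (x + u) - G x‖ = dist (G (x + u)) (G x) := (dist_eq_norm _ _).symm
        _ ≤ (L₁ : ℝ) * dist (x + u) x := hL.dist_le_mul _ _
        _ ≤ (L₁ : ℝ) * r := by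
            apply mul_le_mul_of_nonneg_left _ L₁.coe_nonneg
            simpa [dist_eq_norm] using Metric.mem_closedBall.1 hu
    · exact (((hGC.comp (continuous_const.add continuous_id)).sub
        continuous_const).continuousOn).aestronglyMeasurable hcomp.measurableSet
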